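/- Let p > 0, let f : [0,1] → ℝ be continuous, and let B : [0,1] × ℝ → ℝ be continuous and bounded (sup |B| = β* < ∞), differentiable in x with sup_{t,x} |∂B/∂x(t,x)| = β < p and with ∂B/∂x uniformly continuous in x uniformly in t. Define Υ(t,s) = -min(t,s)·(1-max(t,s)) and κ(t) = ∫₀¹ Υ(t,s)·(B(s,0) + f(s)) ds. Suppose that for each sufficiently small ε > 0, x^ε : [0,1] → ℝ is a twice continuously differentiable function satisfying ẍ^ε(t) = ε²·(p·x^ε(t) + B(t,x^ε(t)) + f(t)) for all t ∈ [0,1] with x^ε(0) = x^ε(1) = 0. Then sup_{0≤t≤1} |ε⁻²·x^ε(t) − κ(t)| → 0 as ε → 0⁺. -/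

import Mathlib

open Filter Set MeasureTheory

open intervalIntegral

lemma ftc_sub (u w : ℝ → ℝ)
    (hu : ∀ s ∈ Set.Icc (0:ℝ) 1, HasDerivWithinAt u (w s) (Set.Icc (0:ℝ) 1) s)
    (hw : ContinuousOn w (Set.Icc (0:ℝ) 1))
    {a b : ℝ} (hab : a ≤ b) (ha : 0 ≤ a) (hb : b ≤ 1) :
    ∫ s in a..b, w s = u b - u a := by
  have hsub : Set.Icc a b ⊆ Set.Icc (0:ℝ) 1 := Set.Icc_subset_Icc ha hb
  refine integral_eq_sub_of_hasDeriv_right_of_le hab ?_ ?_ ?_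
  · exact fun s hs => ((hu s (hsub hs)).continuousWithinAt).mono hsub
  · intro s hs
    have hs1 : s ∈ Set.Icc (0:ℝ) 1 := hsub (Set.Ioo_subset_Icc_self hs)
    refine (hu s hs1).mono_of_mem_nhdsWithin ?_
    have : Set.Ioc s 1 ∈ nhdsWithin s (Set.Ioi s) :=
      Ioc_mem_nhdsGT_of_mem ⟨le_refl s, lt_of_lt_of_le hs.2 hb⟩
    exact Filter.mem_of_superset this (fun y hy => ⟨le_of_lt (lt_of_le_of_lt hs1.1 hy.1), hy.2⟩)
  · exact (hw.mono (by rw [Set.uIcc_of_le hab]; exact hsub)).intervalIntegrable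

lemma green_rep (v v' v'' : ℝ → ℝ)
    (h1 : ∀ t ∈ Set.Icc (0:ℝ) 1, HasDerivWithinAt v (v' t) (Set.Icc (0:ℝ) 1) t)
    (h2 : ∀ t ∈ Set.Icc (0:ℝ) 1, HasDerivWithinAt v' (v'' t) (Set.Icc (0:ℝ) 1) t)
    (hc'' : ContinuousOn v'' (Set.Icc (0:ℝ) 1))
    (hv0 : v 0 = 0) (hv1 : v 1 = 0)
    {t : ℝ} (ht : t ∈ Set.Icc (0:ℝ) 1) :
    v t = ∫ s in (0:ℝ)..1, -(min t s * (1 - max t s)) * v'' s := by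
  obtain ⟨ht0, ht1⟩ := ht
  have hGcont : Continuous fun s : ℝ => -(min t s * (1 - max t s)) := by fun_prop
  have hint : ∀ a b : ℝ, 0 ≤ a → a ≤ b → b ≤ 1 →
      IntervalIntegrable (fun s => -(min t s * (1 - max t s)) * v'' s) volume a b := by
    intro a b ha hab hb
    apply ContinuousOn.intervalIntegrable
    exact (hGcont.continuousOn).mul
      (hc''.mono (by rw [Set.uIcc_of_le hab]; exact Set.Icc_subset_Icc ha hb))
  have hsplit :
      (∫ s in (0:ℝ)..t, -(min t s * (1 - max t s)) * v'' s) +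
        (∫ s in t..(1:ℝ), -(min t s * (1 - max t s)) * v'' s) =
      ∫ s in (0:ℝ)..1, -(min t s * (1 - max t s)) * v'' s :=
    integral_add_adjacent_intervals (hint 0 t le_rfl ht0 ht1) (hint t 1 ht0 ht1 le_rfl)
  have hfst : (∫ s in (0:ℝ)..t, -(min t s * (1 - max t s)) * v'' s)
      = -(1 - t) * (t * v' t - v t) := by
    have e1 : (∫ s in (0:ℝ)..t, -(min t s * (1 - max t s)) * v'' s)
        = ∫ s in (0:ℝ)..t, -(1 - t) * (s * v'' s) := by
      apply integral_congr
      intro s hs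
      rw [Set.uIcc_of_le ht0] at hs
      simp only [inf_eq_right.2 hs.2, sup_eq_left.2 hs.2]
      ring
    rw [e1, intervalIntegral.integral_const_mul]
    have := ftc_sub (fun s => s * v' s - v s) (fun s => s * v'' s)
      (fun s hs => by
        have h := ((hasDerivWithinAt_id s (Set.Icc (0:ℝ) 1)).mul (h2 s hs)).sub (h1 s hs)
        simp only [id_eq] at h
        have e : (1 : ℝ) * v' s + s * v'' s - v' s = s * v'' s := by ring
        rwa [e] at h)
      (by fun_prop) ht0 le_rfl ht1
    rw [this]
    simp [hv0]
  have hsnd : (∫ s in t..(1:ℝ), -(min t s * (1 - max t s)) * v'' s)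
      = -t * (-((1 - t) * v' t + v t)) := by
    have e1 : (∫ s in t..(1:ℝ), -(min t s * (1 - max t s)) * v'' s)
        = ∫ s in t..(1:ℝ), -t * ((1 - s) * v'' s) := by
      apply integral_congr
      intro s hs
      rw [Set.uIcc_of_le ht1] at hs
      simp only [inf_eq_left.2 hs.1, sup_eq_right.2 hs.1]
      ring
    rw [e1, intervalIntegral.integral_const_mul]
    have := ftc_sub (fun s => (1 - s) * v' s + v s) (fun s => (1 - s) * v'' s)
      (fun s hs => by
        have hlin : HasDerivWithinAt (fun s : ℝ => 1 - s) (-1 : ℝ) (Set.Icc (0:ℝ) 1) s :=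
          ((hasDerivWithinAt_id s _).const_sub 1).congr_deriv (by norm_num)
        have h := (hlin.mul (h2 s hs)).add (h1 s hs)
        have e : (-1 : ℝ) * v' s + (1 - s) * v'' s + v' s = (1 - s) * v'' s := by ring
        rwa [e] at h)
      (by fun_prop) ht1 ht0 le_rfl
    rw [this]
    simp [hv1]
  rw [← hsplit, hfst, hsnd]
  ring

lemma green_kernel_bound {t s : ℝ} (ht : t ∈ Set.Icc (0:ℝ) 1) (hs : s ∈ Set.Icc (0:ℝ) 1) :
    |(-(min t s * (1 - max t s)))| ≤ 1 / 4 := by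
  have h1 : 0 ≤ min t s := le_min ht.1 hs.1
  have h2 : max t s ≤ 1 := max_le ht.2 hs.2
  have h3 : min t s ≤ max t s := min_le_max
  rw [abs_neg, abs_of_nonneg (mul_nonneg h1 (by linarith))]
  nlinarith [sq_nonneg (2 * min t s - 1)]


/-- deterministic averaging theorem for the Dirichlet problem.
Under conditions C₁–C₂ on `B` (bounded by `β*`, with `|∂B/∂x| ≤ β < p` and
`∂B/∂x` uniformly continuous in `x` uniformly in `t`), if for each sufficiently
small `ε > 0` the function `x^ε` is a C² solution of
`ẍ^ε = ε²(p·x^ε + B(t,x^ε) + f)` on `[0,1]` with `x^ε(0) = x^ε(1) = 0`, then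
`ε⁻²·x^ε` converges uniformly on `[0,1]` to
`κ(t) = ∫₀¹ Υ(t,s)(B(s,0) + f(s)) ds`, where `Υ(t,s) = -min(t,s)(1-max(t,s))`. -/
theorem dirichlet_averaging_limit (p βstar β : ℝ) (hp : 0 < p)
    (f : ℝ → ℝ) (hf : ContinuousOn f (Set.Icc (0:ℝ) 1))
    (B : ℝ → ℝ → ℝ)
    (hBcont : ContinuousOn (fun q : ℝ × ℝ => B q.1 q.2) (Set.Icc (0:ℝ) 1 ×ˢ Set.univ))
    (hBbd : ∀ t ∈ Set.Icc (0:ℝ) 1, ∀ y : ℝ, |B t y| ≤ βstar)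
    (B' : ℝ → ℝ → ℝ)
    (hBderiv : ∀ t ∈ Set.Icc (0:ℝ) 1, ∀ y : ℝ, HasDerivAt (fun z => B t z) (B' t y) y)
    (hB'bd : ∀ t ∈ Set.Icc (0:ℝ) 1, ∀ y : ℝ, |B' t y| ≤ β)
    (hβ : β < p)
    (hB'uc : ∀ η : ℝ, 0 < η → ∃ δ : ℝ, 0 < δ ∧
      ∀ t ∈ Set.Icc (0:ℝ) 1, ∀ y z : ℝ, |y - z| ≤ δ → |B' t y - B' t z| ≤ η)
    (κ : ℝ → ℝ)
    (hκ : ∀ t, κ t = ∫ s in (0:ℝ)..1,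
      -(min t s * (1 - max t s)) * (B s 0 + f s))
    (x x' x'' : ℝ → ℝ → ℝ) (ε₁ : ℝ) (hε₁ : 0 < ε₁)
    (hsol : ∀ ε ∈ Set.Ioc (0:ℝ) ε₁,
      (∀ t ∈ Set.Icc (0:ℝ) 1, HasDerivWithinAt (x ε) (x' ε t) (Set.Icc (0:ℝ) 1) t) ∧
      (∀ t ∈ Set.Icc (0:ℝ) 1, HasDerivWithinAt (x' ε) (x'' ε t) (Set.Icc (0:ℝ) 1) t) ∧
      ContinuousOn (x' ε) (Set.Icc (0:ℝ) 1) ∧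
      ContinuousOn (x'' ε) (Set.Icc (0:ℝ) 1) ∧
      (∀ t ∈ Set.Icc (0:ℝ) 1,
        x'' ε t = ε ^ 2 * (p * x ε t + B t (x ε t) + f t)) ∧
      x ε 0 = 0 ∧ x ε 1 = 0) :
    Tendsto
      (fun ε : ℝ => ⨆ t : Set.Icc (0:ℝ) 1, |ε⁻¹ ^ 2 * x ε t - κ t|)
      (nhdsWithin 0 (Set.Ioi 0)) (nhds 0) := by
  have h01 : (0:ℝ) ∈ Set.Icc (0:ℝ) 1 := by norm_num
  obtain ⟨F, hF⟩ := isCompact_Icc.exists_bound_of_continuousOn hf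
  simp only [Real.norm_eq_abs] at hF
  set C := βstar + F with hCdef
  have hβ0 : 0 ≤ β := le_trans (abs_nonneg _) (hB'bd 0 h01 0)
  have hβstar0 : 0 ≤ βstar := le_trans (abs_nonneg _) (hBbd 0 h01 0)
  have hF0 : 0 ≤ F := le_trans (abs_nonneg _) (hF 0 h01)
  have hC0 : 0 ≤ C := by positivity
  set K := (p + β) * C / 8 with hKdef
  set r := min ε₁ (Real.sqrt p⁻¹) with hrdef
  have hr : 0 < r := lt_min hε₁ (Real.sqrt_pos.2 (inv_pos.2 hp))
  haveI : Nonempty (Set.Icc (0:ℝ) 1) := ⟨⟨0, h01⟩⟩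
  -- key pointwise bound
  have key : ∀ ε ∈ Set.Ioc (0:ℝ) r, ∀ t ∈ Set.Icc (0:ℝ) 1,
      |ε⁻¹ ^ 2 * x ε t - κ t| ≤ K * ε ^ 2 := by
    intro ε hε t ht
    have hε0 : 0 < ε := hε.1
    have hεε₁ : ε ≤ ε₁ := le_trans hε.2 (min_le_left _ _)
    obtain ⟨hd1, hd2, hc1, hc2, heq, hx0, hx1⟩ := hsol ε ⟨hε0, hεε₁⟩
    have hεp : ε ^ 2 * p ≤ 1 := by
      have h1 : ε ≤ Real.sqrt p⁻¹ := le_trans hε.2 (min_le_right _ _)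
      have h2 : ε ^ 2 ≤ p⁻¹ := by
        calc ε ^ 2 ≤ (Real.sqrt p⁻¹) ^ 2 := pow_le_pow_left₀ hε0.le h1 2
        _ = p⁻¹ := Real.sq_sqrt (inv_pos.2 hp).le
      calc ε ^ 2 * p ≤ p⁻¹ * p := mul_le_mul_of_nonneg_right h2 hp.le
      _ = 1 := inv_mul_cancel₀ hp.ne'
    have hxc : ContinuousOn (x ε) (Set.Icc (0:ℝ) 1) :=
      fun s hs => (hd1 s hs).continuousWithinAt
    obtain ⟨t₀, ht₀, hmax⟩ := isCompact_Icc.exists_isMaxOn ⟨0, h01⟩ hxc.abs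
    set M := |x ε t₀| with hMdef
    have hM0 : 0 ≤ M := abs_nonneg _
    have hMb : ∀ s ∈ Set.Icc (0:ℝ) 1, |x ε s| ≤ M := fun s hs => hmax hs
    -- green representation of x ε
    have hrep : ∀ u ∈ Set.Icc (0:ℝ) 1,
        x ε u = ∫ s in (0:ℝ)..1, -(min u s * (1 - max u s)) * x'' ε s :=
      fun u hu => green_rep (x ε) (x' ε) (x'' ε) hd1 hd2 hc2 hx0 hx1 hu
    -- bound on x''
    have hx''bd : ∀ s ∈ Set.Icc (0:ℝ) 1, |x'' ε s| ≤ ε ^ 2 * (p * M + C) := by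
      intro s hs
      rw [heq s hs, abs_mul, abs_of_nonneg (sq_nonneg ε)]
      apply mul_le_mul_of_nonneg_left _ (sq_nonneg ε)
      calc |p * x ε s + B s (x ε s) + f s|
          ≤ |p * x ε s| + |B s (x ε s)| + |f s| := by
            exact le_trans (abs_add_le _ _) (by gcongr; exact abs_add_le _ _)
        _ ≤ p * M + βstar + F := by
            gcongr
            · rw [abs_mul, abs_of_pos hp]
              exact mul_le_mul_of_nonneg_left (hMb s hs) hp.le
            · exact hBbd s hs _
            · exact hF s hs
        _ = p * M + C := by rw [hCdef]; ring
    -- bound on M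
    have hMbound : M ≤ ε ^ 2 * C / 2 := by
      have hMeq : M = |∫ s in (0:ℝ)..1, -(min t₀ s * (1 - max t₀ s)) * x'' ε s| := by
        rw [hMdef, hrep t₀ ht₀]
      have h1 : M ≤ 1 / 4 * (ε ^ 2 * (p * M + C)) * |1 - 0| := by
        refine hMeq.trans_le ?_
        have := intervalIntegral.norm_integral_le_of_norm_le_const
          (C := 1 / 4 * (ε ^ 2 * (p * M + C)))
          (f := fun s => -(min t₀ s * (1 - max t₀ s)) * x'' ε s) (a := (0:ℝ)) (b := 1) ?_
        · simpa [Real.norm_eq_abs] using this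
        · intro s hs
          rw [Set.uIoc_of_le zero_le_one] at hs
          have hs' : s ∈ Set.Icc (0:ℝ) 1 := Set.Ioc_subset_Icc_self hs
          rw [Real.norm_eq_abs, abs_mul]
          exact mul_le_mul (green_kernel_bound ht₀ hs') (hx''bd s hs') (abs_nonneg _)
            (by norm_num)
        -- nothing
      rw [abs_of_nonneg (by norm_num : (0:ℝ) ≤ 1 - 0)] at h1
      nlinarith [mul_le_mul_of_nonneg_right hεp hM0]
    -- integrability facts
    have hGc : ∀ u : ℝ, Continuous fun s : ℝ => -(min u s * (1 - max u s)) := by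
      intro u; fun_prop
    have hBxc : ContinuousOn (fun s => B s (x ε s)) (Set.Icc (0:ℝ) 1) := by
      have : ContinuousOn (fun s : ℝ => (s, x ε s)) (Set.Icc (0:ℝ) 1) :=
        continuousOn_id.prodMk hxc
      exact hBcont.comp this (fun s hs => ⟨hs, trivial⟩)
    have hB0c : ContinuousOn (fun s => B s 0) (Set.Icc (0:ℝ) 1) := by
      have : ContinuousOn (fun s : ℝ => (s, (0:ℝ))) (Set.Icc (0:ℝ) 1) :=
        continuousOn_id.prodMk continuousOn_const
      exact hBcont.comp this (fun s hs => ⟨hs, trivial⟩)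
    have hint1 : IntervalIntegrable
        (fun s => -(min t s * (1 - max t s)) * (p * x ε s + B s (x ε s) + f s)) volume 0 1 := by
      apply ContinuousOn.intervalIntegrable
      rw [Set.uIcc_of_le zero_le_one]
      exact ((hGc t).continuousOn).mul
        (((continuousOn_const.mul hxc).add hBxc).add hf)
    have hint2 : IntervalIntegrable
        (fun s => -(min t s * (1 - max t s)) * (B s 0 + f s)) volume 0 1 := by
      apply ContinuousOn.intervalIntegrable
      rw [Set.uIcc_of_le zero_le_one]
      exact ((hGc t).continuousOn).mul (hB0c.add hf)
    -- difference representation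
    have hdiff : ε⁻¹ ^ 2 * x ε t - κ t
        = ∫ s in (0:ℝ)..1,
            -(min t s * (1 - max t s)) * (p * x ε s + B s (x ε s) - B s 0) := by
      have e1 : ε⁻¹ ^ 2 * x ε t
          = ∫ s in (0:ℝ)..1,
              -(min t s * (1 - max t s)) * (p * x ε s + B s (x ε s) + f s) := by
        rw [hrep t ht, ← intervalIntegral.integral_const_mul]
        apply integral_congr
        intro s hs
        rw [Set.uIcc_of_le zero_le_one] at hs
        simp only [heq s hs]
        have : ε⁻¹ ^ 2 * ε ^ 2 = 1 := by
          rw [← mul_pow]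
          rw [inv_mul_cancel₀ hε0.ne']
          norm_num
        calc ε⁻¹ ^ 2 * (-(min t s * (1 - max t s)) * (ε ^ 2 * (p * x ε s + B s (x ε s) + f s)))
            = (ε⁻¹ ^ 2 * ε ^ 2) * (-(min t s * (1 - max t s)) * (p * x ε s + B s (x ε s) + f s)) := by
              ring
          _ = -(min t s * (1 - max t s)) * (p * x ε s + B s (x ε s) + f s) := by
              rw [this]; ring
      rw [e1, hκ, ← intervalIntegral.integral_sub hint1 hint2]
      apply integral_congr
      intro s _
      ring
    -- final bound
    rw [hdiff]
    have hMVT : ∀ s ∈ Set.Icc (0:ℝ) 1, |B s (x ε s) - B s 0| ≤ β * |x ε s| := by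
      intro s hs
      have := Convex.norm_image_sub_le_of_norm_hasDerivWithin_le
        (f := fun z => B s z) (f' := fun z => B' s z) (s := Set.univ) (C := β)
        (fun y _ => (hBderiv s hs y).hasDerivWithinAt)
        (fun y _ => by rw [Real.norm_eq_abs]; exact hB'bd s hs y)
        convex_univ (Set.mem_univ 0) (Set.mem_univ (x ε s))
      simpa [Real.norm_eq_abs] using this
    have hb := intervalIntegral.norm_integral_le_of_norm_le_const
      (C := 1 / 4 * ((p + β) * M))
      (f := fun s => -(min t s * (1 - max t s)) * (p * x ε s + B s (x ε s) - B s 0))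
      (a := (0:ℝ)) (b := 1) ?_
    · rw [Real.norm_eq_abs] at hb
      have : (1:ℝ) / 4 * ((p + β) * M) * |1 - 0| ≤ K * ε ^ 2 := by
        rw [abs_of_nonneg (by norm_num : (0:ℝ) ≤ 1 - 0), hKdef]
        nlinarith [mul_le_mul_of_nonneg_left hMbound (by linarith : (0:ℝ) ≤ p + β)]
      exact le_trans hb this
    · intro s hs
      rw [Set.uIoc_of_le zero_le_one] at hs
      have hs' : s ∈ Set.Icc (0:ℝ) 1 := Set.Ioc_subset_Icc_self hs
      rw [Real.norm_eq_abs, abs_mul]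
      apply mul_le_mul (green_kernel_bound ht hs') _ (abs_nonneg _) (by norm_num)
      calc |p * x ε s + B s (x ε s) - B s 0|
          ≤ |p * x ε s| + |B s (x ε s) - B s 0| := by
            have : p * x ε s + B s (x ε s) - B s 0 = p * x ε s + (B s (x ε s) - B s 0) := by ring
            rw [this]; exact abs_add_le _ _
        _ ≤ p * M + β * M := by
            gcongr
            · rw [abs_mul, abs_of_pos hp]
              exact mul_le_mul_of_nonneg_left (hMb s hs') hp.le
            · exact le_trans (hMVT s hs') (mul_le_mul_of_nonneg_left (hMb s hs') hβ0)
        _ = (p + β) * M := by ring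
  -- conclude by squeeze
  have hev : ∀ᶠ ε in nhdsWithin (0:ℝ) (Set.Ioi 0), ε ∈ Set.Ioc (0:ℝ) r :=
    Ioc_mem_nhdsGT hr
  have hub : ∀ᶠ ε in nhdsWithin (0:ℝ) (Set.Ioi 0),
      (⨆ t : Set.Icc (0:ℝ) 1, |ε⁻¹ ^ 2 * x ε t - κ t|) ≤ K * ε ^ 2 := by
    filter_upwards [hev] with ε hε
    exact ciSup_le (fun t => key ε hε t t.2)
  have hlb : ∀ᶠ ε in nhdsWithin (0:ℝ) (Set.Ioi 0),
      (0:ℝ) ≤ ⨆ t : Set.Icc (0:ℝ) 1, |ε⁻¹ ^ 2 * x ε t - κ t| := by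
    filter_upwards [hev] with ε hε
    have hbdd : BddAbove (Set.range fun t : Set.Icc (0:ℝ) 1 => |ε⁻¹ ^ 2 * x ε t - κ t|) := by
      refine ⟨K * ε ^ 2, ?_⟩
      rintro y ⟨t, rfl⟩
      exact key ε hε t t.2
    exact le_trans (abs_nonneg _) (le_ciSup hbdd ⟨0, h01⟩)
  have htend : Tendsto (fun ε : ℝ => K * ε ^ 2) (nhdsWithin (0:ℝ) (Set.Ioi 0)) (nhds 0) := by
    have : Tendsto (fun ε : ℝ => K * ε ^ 2) (nhds 0) (nhds (K * 0 ^ 2)) :=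
      (continuous_const.mul (continuous_pow 2)).tendsto 0
    simpa using this.mono_left nhdsWithin_le_nhds
  exact tendsto_of_tendsto_of_tendsto_of_le_of_le' tendsto_const_nhds htend hlb hub
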